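/- For any group G presented as F/R with F free and any prime ℓ, if a commutator [e_1, e_2] of two elements e_1, e_2 ∈ F lies in [F,R]·R^ℓ, then the homology class of the cycle [ē_1] ∧ [ē_2] = [ē_1|ē_2] - [ē_2|ē_1] vanishes in H_2(G; F_ℓ), where ē_i denotes the image of e_i in G, provided ē_1 and ē_2 commute in G. -/

import Mathlib

/-- The boundary `C₂ → C₁` of the inhomogeneous bar complex computing group homology:
`∂[g₁|g₂] = [g₂] - [g₁g₂] + [g₁]`. -/
noncomputable def barD21 (k : Type) [CommRing k] (G : Type) [Group G] :
    ((G × G) →₀ k) →ₗ[k] (G →₀ k) :=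
  Finsupp.lift (G →₀ k) k (G × G) fun p =>
    Finsupp.single p.2 1 - Finsupp.single (p.1 * p.2) 1 + Finsupp.single p.1 1

/-- The boundary `C₃ → C₂` of the inhomogeneous bar complex computing group homology:
`∂[g₁|g₂|g₃] = [g₂|g₃] - [g₁g₂|g₃] + [g₁|g₂g₃] - [g₁|g₂]`. -/
noncomputable def barD32 (k : Type) [CommRing k] (G : Type) [Group G] :
    ((G × G × G) →₀ k) →ₗ[k] ((G × G) →₀ k) :=
  Finsupp.lift ((G × G) →₀ k) k (G × G × G) fun t =>
    Finsupp.single (t.2.1, t.2.2) 1 - Finsupp.single (t.1 * t.2.1, t.2.2) 1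
      + Finsupp.single (t.1, t.2.1 * t.2.2) 1 - Finsupp.single (t.1, t.2.1) 1

/-- Second group homology `H₂(G; k)`: 2-cycles modulo 2-boundaries of the inhomogeneous
bar complex. -/
noncomputable abbrev groupH2 (k : Type) [CommRing k] (G : Type) [Group G] : Type :=
  @HasQuotient.Quotient ↥(LinearMap.ker (barD21 k G))
    (Submodule k ↥(LinearMap.ker (barD21 k G)))
    (@Submodule.hasQuotient k ↥(LinearMap.ker (barD21 k G)) _ _ _)
    ((LinearMap.range (barD32 k G)).comap (LinearMap.ker (barD21 k G)).subtype)

open scoped commutatorElement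

section AuxCocycle

variable {G : Type} [Group G] {Q : Type} [AddCommGroup Q]

/-- A (not necessarily normalized) `Q`-valued 2-cocycle on `G` with trivial action. -/
structure MyCocycle (G : Type) [Group G] (Q : Type) [AddCommGroup Q] where
  b : G → G → Q
  cocyc : ∀ g₁ g₂ g₃ : G,
    b g₂ g₃ - b (g₁ * g₂) g₃ + b g₁ (g₂ * g₃) - b g₁ g₂ = 0

namespace MyCocycle

variable (c : MyCocycle G Q)

lemma add_eq (g₁ g₂ g₃ : G) :
    c.b g₁ g₂ + c.b (g₁ * g₂) g₃ = c.b g₂ g₃ + c.b g₁ (g₂ * g₃) := by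
  have h := c.cocyc g₁ g₂ g₃
  have h2 : c.b g₂ g₃ + c.b g₁ (g₂ * g₃) - (c.b g₁ g₂ + c.b (g₁ * g₂) g₃) = 0 := by
    rw [← h]; abel
  exact (sub_eq_zero.mp h2).symm

lemma b_one_left (g : G) : c.b 1 g = c.b 1 1 := by
  have h := c.cocyc 1 1 g
  rw [one_mul, one_mul] at h
  have h2 : c.b 1 g - c.b 1 1 = 0 := by rw [← h]; abel
  exact sub_eq_zero.mp h2

lemma b_one_right (g : G) : c.b g 1 = c.b 1 1 := by
  have h := c.cocyc g 1 1
  rw [mul_one, mul_one] at h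
  have h2 : c.b 1 1 - c.b g 1 = 0 := by rw [← h]; abel
  exact (sub_eq_zero.mp h2).symm

lemma b_inv (g : G) : c.b g⁻¹ g = c.b g g⁻¹ := by
  have h := c.cocyc g g⁻¹ g
  rw [mul_inv_cancel, inv_mul_cancel, c.b_one_left g, c.b_one_right g] at h
  have h2 : c.b g⁻¹ g - c.b g g⁻¹ = 0 := by rw [← h]; abel
  exact sub_eq_zero.mp h2

/-- The central extension of `G` by `Q` determined by the 2-cocycle `c`. -/
@[ext]
structure Ext (c : MyCocycle G Q) where
  q : Q
  g : G

variable {c}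

instance : One (Ext c) := ⟨⟨-c.b 1 1, 1⟩⟩
instance : Mul (Ext c) := ⟨fun x y => ⟨x.q + y.q + c.b x.g y.g, x.g * y.g⟩⟩
instance : Inv (Ext c) := ⟨fun x => ⟨-x.q - c.b x.g x.g⁻¹ - c.b 1 1, x.g⁻¹⟩⟩

lemma mul_def (x y : Ext c) : x * y = ⟨x.q + y.q + c.b x.g y.g, x.g * y.g⟩ := rfl
lemma one_def : (1 : Ext c) = ⟨-c.b 1 1, 1⟩ := rfl

instance : Group (Ext c) :=
  Group.ofLeftAxioms
    (fun x y z => by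
      refine Ext.ext ?_ (mul_assoc _ _ _)
      show x.q + y.q + c.b x.g y.g + z.q + c.b (x.g * y.g) z.g
        = x.q + (y.q + z.q + c.b y.g z.g) + c.b x.g (y.g * z.g)
      have h := c.add_eq x.g y.g z.g
      have h2 : (x.q + y.q + c.b x.g y.g + z.q + c.b (x.g * y.g) z.g)
          - (x.q + (y.q + z.q + c.b y.g z.g) + c.b x.g (y.g * z.g))
          = (c.b x.g y.g + c.b (x.g * y.g) z.g)
            - (c.b y.g z.g + c.b x.g (y.g * z.g)) := by abel
      rw [h, sub_self] at h2
      exact sub_eq_zero.mp h2)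
    (fun x => by
      refine Ext.ext ?_ (one_mul _)
      show -c.b 1 1 + x.q + c.b 1 x.g = x.q
      rw [c.b_one_left x.g]; abel)
    (fun x => by
      refine Ext.ext ?_ (inv_mul_cancel _)
      show -x.q - c.b x.g x.g⁻¹ - c.b 1 1 + x.q + c.b x.g⁻¹ x.g = -c.b 1 1
      rw [c.b_inv x.g]; abel)

variable (c)

/-- Projection to `G`, as a group homomorphism. -/
def sndHom : Ext c →* G where
  toFun := Ext.g
  map_one' := rfl
  map_mul' _ _ := rfl

variable {c}

lemma mul_comm_of_g_one (x y : Ext c) (hx : x.g = 1) : x * y = y * x := by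
  refine Ext.ext ?_ ?_
  · show x.q + y.q + c.b x.g y.g = y.q + x.q + c.b y.g x.g
    rw [hx, c.b_one_left y.g, c.b_one_right y.g]; abel
  · show x.g * y.g = y.g * x.g
    rw [hx, one_mul, mul_one]

lemma mul_inv_same (a b' : Q) (k : G) :
    (⟨a, k⟩ : Ext c) * (⟨b', k⟩ : Ext c)⁻¹ = ⟨a - b' - c.b 1 1, 1⟩ := by
  refine Ext.ext ?_ ?_
  · show a + (-b' - c.b k k⁻¹ - c.b 1 1) + c.b k k⁻¹ = a - b' - c.b 1 1
    abel
  · exact mul_inv_cancel k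

lemma commutator_eq (x y : Ext c) (h : x.g * y.g = y.g * x.g) :
    ⁅x, y⁆ = ⟨c.b x.g y.g - c.b y.g x.g - c.b 1 1, 1⟩ := by
  have hxy : ⁅x, y⁆ = (x * y) * (y * x)⁻¹ := by
    rw [commutatorElement_def, mul_inv_rev]; group
  rw [hxy, mul_def x y, mul_def y x, ← h, mul_inv_same]
  refine Ext.ext ?_ rfl
  show x.q + y.q + c.b x.g y.g - (y.q + x.q + c.b y.g x.g) - c.b 1 1
    = c.b x.g y.g - c.b y.g x.g - c.b 1 1
  abel

lemma pow_formula (q : Q) : ∀ n : ℕ,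
    (⟨q, 1⟩ : Ext c) ^ (n + 1) = ⟨(n + 1) • q + n • c.b 1 1, 1⟩
  | 0 => by
    rw [pow_one]
    refine Ext.ext ?_ rfl
    simp
  | n + 1 => by
    rw [pow_succ, pow_formula q n, mul_def]
    refine Ext.ext ?_ (mul_one 1)
    show (n + 1) • q + n • c.b 1 1 + q + c.b 1 1
      = (n + 1 + 1) • q + (n + 1) • c.b 1 1
    rw [succ_nsmul q (n + 1), succ_nsmul (c.b 1 1) n]
    abel

lemma pow_eq_one (q : Q) (n : ℕ) (hn : n ≠ 0) (h1 : n • q = 0)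
    (h2 : n • c.b 1 1 = 0) : (⟨q, 1⟩ : Ext c) ^ n = 1 := by
  obtain ⟨m, rfl⟩ := Nat.exists_eq_succ_of_ne_zero hn
  rw [pow_formula, one_def]
  refine Ext.ext ?_ rfl
  show (m + 1) • q + m • c.b 1 1 = -c.b 1 1
  have hm : m • c.b 1 1 = (m + 1) • c.b 1 1 - c.b 1 1 := by
    rw [succ_nsmul]; abel
  rw [h1, hm, h2]
  abel

end MyCocycle

end AuxCocycle

/-- If the commutator `[e₁,e₂]` of two elements of a free group `F` lies in `[F,R]·Rˡ`,
and the images `ē₁, ē₂` commute in `G = F/R`, then the 2-cycle `[ē₁|ē₂] - [ē₂|ē₁]` is a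
boundary, i.e. its class vanishes in `H₂(G; 𝔽_ℓ)`. -/
theorem cycle_null_of_commutator_mem (α : Type) (R : Subgroup (FreeGroup α)) [R.Normal]
    (ℓ : ℕ) [Fact (Nat.Prime ℓ)] (e₁ e₂ : FreeGroup α)
    (h : ⁅e₁, e₂⁆ ∈ ⁅(⊤ : Subgroup (FreeGroup α)), R⁆ ⊔
        Subgroup.closure {x | ∃ r ∈ R, x = r ^ ℓ})
    (hcomm : Commute (QuotientGroup.mk e₁ : FreeGroup α ⧸ R) (QuotientGroup.mk e₂)) :
    Finsupp.single ((QuotientGroup.mk e₁ : FreeGroup α ⧸ R), (QuotientGroup.mk e₂ : FreeGroup α ⧸ R)) (1 : ZMod ℓ)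
      - Finsupp.single ((QuotientGroup.mk e₂ : FreeGroup α ⧸ R), (QuotientGroup.mk e₁ : FreeGroup α ⧸ R)) 1
      ∈ LinearMap.range (barD32 (ZMod ℓ) (FreeGroup α ⧸ R)) := by
  classical
  set G := FreeGroup α ⧸ R with hG
  set P : Submodule (ZMod ℓ) ((G × G) →₀ ZMod ℓ) :=
    LinearMap.range (barD32 (ZMod ℓ) G) with hP
  have hbar : ∀ t : G × G × G,
      barD32 (ZMod ℓ) G (Finsupp.single t 1) =
        Finsupp.single (t.2.1, t.2.2) 1 - Finsupp.single (t.1 * t.2.1, t.2.2) 1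
          + Finsupp.single (t.1, t.2.1 * t.2.2) 1 - Finsupp.single (t.1, t.2.1) 1 := by
    intro t
    simp [barD32, Finsupp.lift_apply, Finsupp.sum_single_index]
  let c : MyCocycle G (((G × G) →₀ ZMod ℓ) ⧸ P) :=
    { b := fun g h' => Submodule.Quotient.mk (Finsupp.single (g, h') 1)
      cocyc := by
        intro g₁ g₂ g₃
        have hm : (Finsupp.single (g₂, g₃) (1 : ZMod ℓ)
            - Finsupp.single (g₁ * g₂, g₃) 1
            + Finsupp.single (g₁, g₂ * g₃) 1 - Finsupp.single (g₁, g₂) 1) ∈ P :=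
          ⟨Finsupp.single (g₁, g₂, g₃) 1, hbar (g₁, g₂, g₃)⟩
        have h0 := (Submodule.Quotient.mk_eq_zero P).mpr hm
        rw [← Submodule.mkQ_apply, map_sub, map_add, map_sub] at h0
        simpa [Submodule.mkQ_apply] using h0 }
  have htor : ∀ z : ((G × G) →₀ ZMod ℓ) ⧸ P, ℓ • z = 0 := fun z => by
    rw [← Nat.cast_smul_eq_nsmul (ZMod ℓ), ZMod.natCast_self, zero_smul]
  let φ : FreeGroup α →* MyCocycle.Ext c :=
    FreeGroup.lift fun a => ⟨0, QuotientGroup.mk (FreeGroup.of a)⟩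
  have hsnd : ∀ w : FreeGroup α, (φ w).g = (QuotientGroup.mk w : G) := by
    intro w
    have heq : (MyCocycle.sndHom c).comp φ = QuotientGroup.mk' R := by
      apply FreeGroup.ext_hom
      intro a
      simp only [φ, MonoidHom.comp_apply, FreeGroup.lift_apply_of]
      rfl
    exact DFunLike.congr_fun heq w
  have hgone : ∀ r ∈ R, (φ r).g = 1 := fun r hr => by
    rw [hsnd r]
    exact (QuotientGroup.eq_one_iff r).mpr hr
  have hgen : (⁅(⊤ : Subgroup (FreeGroup α)), R⁆ ⊔
      Subgroup.closure {x | ∃ r ∈ R, x = r ^ ℓ}) ≤ φ.ker := by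
    apply sup_le
    · rw [Subgroup.commutator_le]
      intro f _ r hr
      rw [MonoidHom.mem_ker, map_commutatorElement,
        commutatorElement_eq_one_iff_mul_comm]
      exact (MyCocycle.mul_comm_of_g_one (φ r) (φ f) (hgone r hr)).symm
    · rw [Subgroup.closure_le]
      rintro x ⟨r, hr, rfl⟩
      rw [SetLike.mem_coe, MonoidHom.mem_ker, map_pow]
      have hx : φ r = (⟨(φ r).q, 1⟩ : MyCocycle.Ext c) :=
        MyCocycle.Ext.ext rfl (hgone r hr)
      rw [hx]
      exact MyCocycle.pow_eq_one _ ℓ (Fact.out : Nat.Prime ℓ).ne_zero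
        (htor _) (htor _)
  have hc1 : φ ⁅e₁, e₂⁆ = 1 := hgen h
  rw [map_commutatorElement] at hc1
  have hcomm' : (φ e₁).g * (φ e₂).g = (φ e₂).g * (φ e₁).g := by
    rw [hsnd e₁, hsnd e₂]; exact hcomm.eq
  rw [MyCocycle.commutator_eq _ _ hcomm', MyCocycle.one_def] at hc1
  have hq := congrArg MyCocycle.Ext.q hc1
  simp only [hsnd e₁, hsnd e₂] at hq
  -- hq : c.b ē₁ ē₂ - c.b ē₂ ē₁ - c.b 1 1 = -c.b 1 1
  have h0 : c.b (QuotientGroup.mk e₁) (QuotientGroup.mk e₂)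
      - c.b (QuotientGroup.mk e₂) (QuotientGroup.mk e₁) = 0 := by
    calc c.b (QuotientGroup.mk e₁) (QuotientGroup.mk e₂)
        - c.b (QuotientGroup.mk e₂) (QuotientGroup.mk e₁)
        = (c.b (QuotientGroup.mk e₁) (QuotientGroup.mk e₂)
            - c.b (QuotientGroup.mk e₂) (QuotientGroup.mk e₁) - c.b 1 1)
          + c.b 1 1 := by abel
      _ = -c.b 1 1 + c.b 1 1 := by rw [hq]
      _ = 0 := by abel
  have hmk : Submodule.Quotient.mk
      (Finsupp.single ((QuotientGroup.mk e₁ : G), (QuotientGroup.mk e₂ : G)) (1 : ZMod ℓ)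
        - Finsupp.single ((QuotientGroup.mk e₂ : G), (QuotientGroup.mk e₁ : G)) 1)
      = (0 : ((G × G) →₀ ZMod ℓ) ⧸ P) := by
    rw [← Submodule.mkQ_apply, map_sub]
    exact h0
  exact (Submodule.Quotient.mk_eq_zero P).mp hmk
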